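/- (Screening utility from noise bound) Let c ∈ ℝ^d, let (m_1,…,m_d) order the indices so |c_{m_1}| ≥ … ≥ |c_{m_d}|, and run the greedy noisy-selection procedure: maintain res_1 = [d], at step t pick i_t = argmax_{i ∈ res_t} |c_i + ξ_{t,i}| and set res_{t+1} = res_t \ {i_t}, for noise values ξ_{t,i}. If all noise magnitudes satisfy |ξ_{t,i}| ≤ s/2, then for every j ∈ [k], |c_{m_j}| − |c_{i_j}| ≤ s. -/
import Mathlib


/-- Screening utility from a noise bound: run the greedy noisy-selection procedure
that at step `t` picks `i t`, the available index maximizing `|c i + ξ t i|`.  If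
`m` orders the indices by decreasing `|c|` and all noise magnitudes are at most
`s/2`, then for every step `j`, `|c (m j)| - |c (i j)| ≤ s`. -/
theorem screening_utility {d k : ℕ} (hk : k ≤ d)
    (c : Fin d → ℝ) (ξ : Fin k → Fin d → ℝ) (s : ℝ)
    (m : Equiv.Perm (Fin d))
    (hm : ∀ a b : Fin d, a ≤ b → |c (m b)| ≤ |c (m a)|)
    (i : Fin k → Fin d)
    (hsel_mem : ∀ t : Fin k, ∀ t' : Fin k, t' < t → i t' ≠ i t)
    (hsel_max : ∀ t : Fin k, ∀ j : Fin d, (∀ t' : Fin k, t' < t → i t' ≠ j) →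
      |c j + ξ t j| ≤ |c (i t) + ξ t (i t)|)
    (hnoise : ∀ t : Fin k, ∀ j : Fin d, |ξ t j| ≤ s / 2) :
    ∀ j : Fin k, |c (m (Fin.castLE hk j))| - |c (i j)| ≤ s := by
  intro j
  set J : Fin d := Fin.castLE hk j with hJ
  -- pigeonhole: some m a with a ≤ J was not selected before step j
  have hexists : ∃ a : Fin d, a ≤ J ∧ ∀ t' : Fin k, t' < j → i t' ≠ m a := by
    by_contra hcon
    push_neg at hcon
    have hk0 : 0 < k := j.pos
    have hch : ∀ a : Fin d, ∃ t' : Fin k, a ≤ J → (t' < j ∧ i t' = m a) := by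
      intro a
      by_cases h : a ≤ J
      · exact (hcon a h).imp (fun t ht _ => ht)
      · exact ⟨⟨0, hk0⟩, fun h' => absurd h' h⟩
    choose g hg using hch
    have hinj : Set.InjOn g {a : Fin d | a ≤ J} := by
      intro a ha a' ha' hgg
      have : m a = m a' := by
        rw [← (hg a ha).2, ← (hg a' ha').2, hgg]
      exact m.injective this
    have hmaps : Set.MapsTo g {a : Fin d | a ≤ J}
        {t : Fin k | t < j} := fun a ha => (hg a ha).1
    have hcard := Set.ncard_le_ncard_of_injOn _ hmaps hinj (Set.toFinite _)
    have h1 : ({a : Fin d | a ≤ J} : Set (Fin d)).ncard = J.val + 1 := by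
      have : {a : Fin d | a ≤ J} = ↑(Finset.Iic J) := by ext x; simp
      rw [this, Set.ncard_coe_finset, Fin.card_Iic]
    have h2 : ({t : Fin k | t < j} : Set (Fin k)).ncard = j.val := by
      have : {t : Fin k | t < j} = ↑(Finset.Iio j) := by ext x; simp
      rw [this, Set.ncard_coe_finset]
      simp
    have hJv : J.val = j.val := rfl
    omega
  
  obtain ⟨a, haJ, hfree⟩ := hexists
  have hmono := hm a J haJ
  have hmax := hsel_max j (m a) hfree
  have hn1 := hnoise j (m a)
  have hn2 := hnoise j (i j)
  have e1 : |c (m a)| ≤ |c (m a) + ξ j (m a)| + |ξ j (m a)| := by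
    calc |c (m a)| = |(c (m a) + ξ j (m a)) + (-(ξ j (m a)))| := by ring_nf
      _ ≤ |c (m a) + ξ j (m a)| + |(-(ξ j (m a)))| := abs_add_le _ _
      _ = |c (m a) + ξ j (m a)| + |ξ j (m a)| := by rw [abs_neg]
  have e2 : |c (i j) + ξ j (i j)| ≤ |c (i j)| + |ξ j (i j)| := abs_add_le _ _
  have := hmono.trans (e1.trans (by linarith [hmax, e2] : |c (m a) + ξ j (m a)| + |ξ j (m a)| ≤ |c (i j)| + s))
  linarith
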